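/- Let X be a real normed vector space and let M be an infinite-dimensional linear subspace of X. Then there exist a sequence (m_n)_{n≥1} of vectors of M and a sequence (x'_n)_{n≥1} of continuous linear functionals on X such that for every n, ‖m_n‖ = ‖x'_n‖ = x'_n(m_n) = 1, and x'_i(m_n) = 0 for all 1 ≤ i < n. -/

import Mathlib

section Aux

variable {X : Type*} [NormedAddCommGroup X] [NormedSpace ℝ X]

lemma exists_step (M : Submodule ℝ X) (hM : ¬ FiniteDimensional ℝ M)
    (n : ℕ) (g : Fin n → (X →L[ℝ] ℝ)) :
    ∃ p : X × (X →L[ℝ] ℝ), p.1 ∈ M ∧ ‖p.1‖ = 1 ∧ ‖p.2‖ = 1 ∧ p.2 p.1 = 1 ∧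
      ∀ i, g i p.1 = 0 := by
  -- find a nonzero vector of M killed by all g i
  have h1 : ∃ x : X, x ∈ M ∧ ‖x‖ = 1 ∧ ∀ i, g i x = 0 := by
    set φ : M →ₗ[ℝ] (Fin n → ℝ) :=
      LinearMap.pi (fun i => ((g i).toLinearMap).comp M.subtype) with hφ
    have hker : LinearMap.ker φ ≠ ⊥ := by
      intro h
      exact hM (FiniteDimensional.of_injective φ (LinearMap.ker_eq_bot.mp h))
    obtain ⟨y, hy, hy0⟩ := Submodule.exists_mem_ne_zero_of_ne_bot hker
    have hynorm : ‖(y : X)‖ ≠ 0 := by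
      simpa [norm_eq_zero, Submodule.coe_eq_zero] using hy0
    refine ⟨‖(y : X)‖⁻¹ • (y : X), M.smul_mem _ y.2, ?_, ?_⟩
    · simp [norm_smul, inv_mul_cancel₀ hynorm]
    · intro i
      have : φ y = 0 := hy
      have hgi : g i (y : X) = 0 := congrFun this i
      simp [map_smul, hgi]
  obtain ⟨x, hxM, hx1, hxg⟩ := h1
  have hx0 : x ≠ 0 := by intro h; rw [h] at hx1; simp at hx1
  obtain ⟨f, hf1, hfx⟩ := exists_dual_vector ℝ x (norm_ne_zero_iff.mpr hx0)
  exact ⟨(x, f), hxM, hx1, hf1, by simp [hfx, hx1], hxg⟩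

noncomputable def seqAux (M : Submodule ℝ X) (hM : ¬ FiniteDimensional ℝ M) :
    ℕ → X × (X →L[ℝ] ℝ)
  | n => Classical.choose
      (exists_step M hM n (fun i : Fin n => (seqAux M hM i).2))
  decreasing_by all_goals exact i.2

lemma seqAux_spec (M : Submodule ℝ X) (hM : ¬ FiniteDimensional ℝ M) (n : ℕ) :
    (seqAux M hM n).1 ∈ M ∧ ‖(seqAux M hM n).1‖ = 1 ∧ ‖(seqAux M hM n).2‖ = 1 ∧
      (seqAux M hM n).2 (seqAux M hM n).1 = 1 ∧
      ∀ i : Fin n, (seqAux M hM i).2 (seqAux M hM n).1 = 0 := by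
  rw [seqAux]
  exact Classical.choose_spec (exists_step M hM n (fun i : Fin n => (seqAux M hM i).2))

end Aux

/-- In any infinite-dimensional subspace `M` of a real normed space `X` one can find
a sequence `(m n)` in `M` and a sequence `(x' n)` of continuous linear functionals on `X`
such that `‖m n‖ = ‖x' n‖ = x' n (m n) = 1` for all `n`, while `x' i (m n) = 0`
whenever `i < n`. (Indexing starts at `0` rather than `1`.) -/
theorem exists_biorthogonal_sequence {X : Type*} [NormedAddCommGroup X] [NormedSpace ℝ X]
    (M : Submodule ℝ X) (hM : ¬ FiniteDimensional ℝ M) :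
    ∃ (m : ℕ → X) (x' : ℕ → (X →L[ℝ] ℝ)),
      (∀ n, m n ∈ M) ∧
      (∀ n, ‖m n‖ = 1 ∧ ‖x' n‖ = 1 ∧ x' n (m n) = 1) ∧
      (∀ i n, i < n → x' i (m n) = 0) := by
  refine ⟨fun n => (seqAux M hM n).1, fun n => (seqAux M hM n).2, ?_, ?_, ?_⟩
  · exact fun n => (seqAux_spec M hM n).1
  · exact fun n => ⟨(seqAux_spec M hM n).2.1, (seqAux_spec M hM n).2.2.1,
      (seqAux_spec M hM n).2.2.2.1⟩
  · intro i n hin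
    exact (seqAux_spec M hM n).2.2.2.2 ⟨i, hin⟩
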